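/- Let K be a field, q, λ, μ ∈ K with q, λ, μ invertible and q⁻¹λ - qμ ≠ 0 and qλ - q⁻¹μ ≠ 0. Define the affine quantum R-matrix R(λ,μ;q) as the N²×N² matrix R(λ,μ;q) = (λ-μ)/(q⁻¹λ-qμ)·Σ_{i≠j} E_{i,i}⊗E_{j,j} + Σ_i E_{i,i}⊗E_{i,i} + (q⁻¹-q)λ/(q⁻¹λ-qμ)·Σ_{i<j} E_{i,j}⊗E_{j,i} + (q⁻¹-q)μ/(q⁻¹λ-qμ)·Σ_{i>j} E_{i,j}⊗E_{j,i}. Then R(λ,μ;q)·R(λ,μ;q⁻¹) = 1, i.e. the inverse of R(λ,μ;q) is R(λ,μ;q⁻¹). -/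

import Mathlib

open Matrix

/-- The affine quantum trigonometric R-matrix `R(λ,μ;q)`:
`R(λ,μ;q) = (λ-μ)/(q⁻¹λ-qμ)·Σ_{i≠j} E_{i,i}⊗E_{j,j} + Σ_i E_{i,i}⊗E_{i,i}
  + (q⁻¹-q)λ/(q⁻¹λ-qμ)·Σ_{i<j} E_{i,j}⊗E_{j,i} + (q⁻¹-q)μ/(q⁻¹λ-qμ)·Σ_{i>j} E_{i,j}⊗E_{j,i}`. -/
noncomputable def Raff (N : ℕ) (K : Type*) [Field K] (lam mu q : K) :
    Matrix (Fin N × Fin N) (Fin N × Fin N) K :=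
  Matrix.of fun p r =>
    (if p.1 = r.1 ∧ p.2 = r.2 ∧ p.1 ≠ p.2 then (lam - mu) / (q⁻¹ * lam - q * mu) else 0)
    + (if p.1 = r.1 ∧ p.2 = r.2 ∧ p.1 = p.2 then 1 else 0)
    + (if p.1 = r.2 ∧ p.2 = r.1 ∧ p.1 < p.2 then
        ((q⁻¹ - q) * lam) / (q⁻¹ * lam - q * mu) else 0)
    + (if p.1 = r.2 ∧ p.2 = r.1 ∧ p.2 < p.1 then
        ((q⁻¹ - q) * mu) / (q⁻¹ * lam - q * mu) else 0)

lemma Raff_apply_ne {N : ℕ} {K : Type*} [Field K] (lam mu q : K)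
    (p r : Fin N × Fin N) (h1 : r ≠ p) (h2 : r ≠ Prod.swap p) :
    Raff N K lam mu q p r = 0 := by
  rcases p with ⟨i, j⟩; rcases r with ⟨k, l⟩
  have e1 : ¬(i = k ∧ j = l) := fun ⟨a, b⟩ => h1 (by simp [a, b])
  have e2 : ¬(i = l ∧ j = k) := fun ⟨a, b⟩ => h2 (by simp [a, b])
  simp only [Raff, Matrix.of_apply]
  rw [if_neg (fun h => e1 ⟨h.1, h.2.1⟩), if_neg (fun h => e1 ⟨h.1, h.2.1⟩),
    if_neg (fun h => e2 ⟨h.1, h.2.1⟩), if_neg (fun h => e2 ⟨h.1, h.2.1⟩)]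
  ring

/-- `R(λ,μ;q)·R(λ,μ;q⁻¹) = 1`. -/
theorem Raff_mul_Raff_qinv (N : ℕ) (hN : 1 ≤ N) (K : Type*) [Field K]
    (lam mu q : K) (hlam : lam ≠ 0) (hmu : mu ≠ 0) (hq : q ≠ 0)
    (hden : q⁻¹ * lam - q * mu ≠ 0) (hden' : q * lam - q⁻¹ * mu ≠ 0) :
    Raff N K lam mu q * Raff N K lam mu q⁻¹ = 1 := by
  ext p s
  rw [mul_apply]
  rw [← Finset.sum_subset (Finset.subset_univ ({p, Prod.swap p} : Finset _))]
  swap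
  · intro r _ hr
    simp only [Finset.mem_insert, Finset.mem_singleton, not_or] at hr
    rw [Raff_apply_ne _ _ _ _ _ hr.1 hr.2, zero_mul]
  rcases p with ⟨i, j⟩
  by_cases hij : i = j
  · subst hij
    rw [show ({(i, i), Prod.swap (i, i)} : Finset (Fin N × Fin N)) = {(i, i)} by simp,
      Finset.sum_singleton]
    have h1 : Raff N K lam mu q (i, i) (i, i) = 1 := by
      simp [Raff]
    rw [h1, one_mul]
    rcases s with ⟨k, l⟩
    by_cases hs : (k, l) = ((i, i) : Fin N × Fin N)
    · rw [hs]
      simp [Raff, Matrix.one_apply]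
    · rw [Raff_apply_ne _ _ _ _ _ hs (by simpa using hs), Matrix.one_apply_ne (Ne.symm hs)]
  · have hsw : ((i, j) : Fin N × Fin N) ≠ Prod.swap (i, j) := by
      simp [Prod.ext_iff, hij]
    rw [Finset.sum_pair hsw]
    simp only [Prod.swap_prod_mk]
    have hA : Raff N K lam mu q (i, j) (i, j) = (lam - mu) / (q⁻¹ * lam - q * mu) := by
      simp [Raff, hij]
    have hA' : Raff N K lam mu q⁻¹ (i, j) (i, j) = (lam - mu) / (q * lam - q⁻¹ * mu) := by
      simp [Raff, hij]
    rcases s with ⟨k, l⟩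
    by_cases hs1 : ((k, l) : Fin N × Fin N) = (i, j)
    · -- s = p : diagonal entry, should be 1
      rw [hs1, Matrix.one_apply_eq, hA]
      have hB : Raff N K lam mu q (i, j) (j, i)
          = (if i < j then ((q⁻¹ - q) * lam) / (q⁻¹ * lam - q * mu)
             else ((q⁻¹ - q) * mu) / (q⁻¹ * lam - q * mu)) := by
        rcases lt_or_gt_of_ne hij with h | h <;>
          simp [Raff, hij, h, (lt_asymm h), Ne.symm hij]
      have hB' : Raff N K lam mu q⁻¹ (j, i) (i, j)
          = (if i < j then ((q - q⁻¹) * mu) / (q * lam - q⁻¹ * mu)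
             else ((q - q⁻¹) * lam) / (q * lam - q⁻¹ * mu)) := by
        rcases lt_or_gt_of_ne hij with h | h <;>
          simp [Raff, hij, h, (lt_asymm h), Ne.symm hij]
      rw [hA', hB, hB']
      rcases lt_or_gt_of_ne hij with h | h <;>
        simp only [h, if_pos, if_neg, (lt_asymm h), if_false, if_true] <;>
        rw [div_mul_div_comm, div_mul_div_comm, ← add_div,
          div_eq_one_iff_eq (mul_ne_zero hden hden')] <;> field_simp <;> ring
    · by_cases hs2 : ((k, l) : Fin N × Fin N) = (j, i)
      · -- s = swap p : should be 0
        rw [hs2, Matrix.one_apply_ne (by simpa [Prod.ext_iff] using fun h _ => hij h)]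
        have hB : Raff N K lam mu q (i, j) (j, i)
            = (if i < j then ((q⁻¹ - q) * lam) / (q⁻¹ * lam - q * mu)
               else ((q⁻¹ - q) * mu) / (q⁻¹ * lam - q * mu)) := by
          rcases lt_or_gt_of_ne hij with h | h <;>
            simp [Raff, hij, h, (lt_asymm h), Ne.symm hij]
        have hA'2 : Raff N K lam mu q⁻¹ (j, i) (j, i) = (lam - mu) / (q * lam - q⁻¹ * mu) := by
          simp [Raff, Ne.symm hij]
        have hB' : Raff N K lam mu q⁻¹ (i, j) (j, i)
            = (if i < j then ((q - q⁻¹) * lam) / (q * lam - q⁻¹ * mu)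
               else ((q - q⁻¹) * mu) / (q * lam - q⁻¹ * mu)) := by
          rcases lt_or_gt_of_ne hij with h | h <;>
            simp [Raff, hij, h, (lt_asymm h), Ne.symm hij]
        rw [hA, hB, hA'2, hB']
        rcases lt_or_gt_of_ne hij with h | h <;>
          simp only [h, if_pos, if_neg, (lt_asymm h), if_false, if_true] <;>
          rw [div_mul_div_comm, div_mul_div_comm, ← add_div, div_eq_zero_iff] <;>
          exact Or.inl (by ring)
      · rw [Raff_apply_ne lam mu q⁻¹ _ _ hs1 (by simpa using hs2),
          Raff_apply_ne lam mu q⁻¹ _ _ hs2 (by simpa using hs1), mul_zero, mul_zero, add_zero,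
          Matrix.one_apply_ne (Ne.symm hs1)]
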